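/- arXiv:2002.12693 — 5 statements merged into one kernel-verified Lean document; each statement's English description precedes it below -/
import Mathlib

section
/- Uniqueness of the sum-of-binomials representation (Lemma 1): if c, c' : σ → ℤ are integer coefficient families with Σ_{j ∈ σ} (c j) • b j = Σ_{j ∈ σ} (c' j) • b j in R = MvPolynomial (K ⊕ X) ℚ, then c = c'. In particular, each generator of the steady state ideal of a reversible chemical reaction network can be written in exactly one way as an integer linear combination of the binomials associated with the reactions. -/
/-- Lemma 1: uniqueness of the sum-of-binomials representation.
If two integer coefficient families give the same linear combination of the
reaction binomials `b j` in `MvPolynomial (K ⊕ X) ℚ`, then they coincide. -/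
theorem sum_of_binomials_representation_unique
    {K X σ : Type*} [Fintype σ]
    (kf kb : σ → K) (μ ν : σ → (X →₀ ℕ))
    (hkf : Function.Injective kf) (hkb : Function.Injective kb)
    (hdisj : Disjoint (Set.range kf) (Set.range kb))
    (b : σ → MvPolynomial (K ⊕ X) ℚ)
    (hb : ∀ j, b j =
      MvPolynomial.monomial
        (Finsupp.single (Sum.inl (kf j)) 1 + Finsupp.mapDomain Sum.inr (μ j)) (-1 : ℚ) +
      MvPolynomial.monomial
        (Finsupp.single (Sum.inl (kb j)) 1 + Finsupp.mapDomain Sum.inr (ν j)) (1 : ℚ))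
    (c c' : σ → ℤ)
    (h : ∑ j : σ, (c j) • b j = ∑ j : σ, (c' j) • b j) :
    c = c' := by
  classical
  funext j
  set m : (K ⊕ X) →₀ ℕ :=
    Finsupp.single (Sum.inl (kf j)) 1 + Finsupp.mapDomain Sum.inr (μ j) with hmdef
  have hinl : ∀ (w : X →₀ ℕ), (Finsupp.mapDomain Sum.inr w) (Sum.inl (kf j) : K ⊕ X) = 0 := by
    intro w
    apply Finsupp.mapDomain_notin_range
    rintro ⟨x, hx⟩
    cases hx
  have hmval : m (Sum.inl (kf j)) = 1 := by
    simp [hmdef, hinl, Finsupp.single_apply]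
  have hfwd : ∀ i : σ,
      (Finsupp.single (Sum.inl (kf i)) 1 + Finsupp.mapDomain Sum.inr (μ i) = m) ↔ i = j := by
    intro i
    constructor
    · intro he
      have := congrArg (fun f : (K ⊕ X) →₀ ℕ => f (Sum.inl (kf j))) he
      simp only [Finsupp.add_apply, hinl, hmval, Finsupp.single_apply, add_zero] at this
      by_contra hij
      have hne : kf i ≠ kf j := fun hc => hij (hkf hc)
      simp [Sum.inl.injEq, hne] at this
    · rintro rfl; rfl
  have hbwd : ∀ i : σ,
      (Finsupp.single (Sum.inl (kb i)) 1 + Finsupp.mapDomain Sum.inr (ν i) ≠ m) := by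
    intro i he
    have := congrArg (fun f : (K ⊕ X) →₀ ℕ => f (Sum.inl (kf j))) he
    have hne : kb i ≠ kf j := by
      intro hc
      exact (Set.disjoint_right.mp hdisj ⟨i, rfl⟩) ⟨j, hc.symm⟩
    simp only [Finsupp.add_apply, hinl, hmval, Finsupp.single_apply, add_zero] at this
    simp [Sum.inl.injEq, hne] at this
  have key : ∀ (d : σ → ℤ),
      MvPolynomial.coeff m (∑ i : σ, (d i) • b i) = -(d j : ℚ) := by
    intro d
    rw [MvPolynomial.coeff_sum]
    have : ∀ i : σ, MvPolynomial.coeff m ((d i) • b i)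
        = (d i : ℚ) * (if i = j then (-1 : ℚ) else 0) := by
      intro i
      rw [MvPolynomial.coeff_smul, hb i, MvPolynomial.coeff_add,
        MvPolynomial.coeff_monomial, MvPolynomial.coeff_monomial]
      rw [if_neg (hbwd i)]
      by_cases hij : i = j
      · simp [hij, (hfwd j).mpr rfl]
      · rw [if_neg (fun hc => hij ((hfwd i).mp hc))]
        simp [hij]
    simp only [this]
    simp [Finset.sum_ite_eq']
  have := (key c).symm.trans ((congrArg (MvPolynomial.coeff m) h).trans (key c'))
  have : (c j : ℚ) = (c' j : ℚ) := by linarith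
  exact_mod_cast this
end

section
/- Reducibility forces a shared reaction binomial (the claim proved inside the paper's Theorem 1): fix a monomial order m on exponent vectors over K ⊕ X, and let p = Σ_{j ∈ σ} (c j) • b j and q = Σ_{j ∈ σ} (d j) • b j be nonzero, where c, d : σ → ℚ. If the leading monomial of p divides the leading monomial of q (i.e., m.degree p ≤ m.degree q componentwise as finitely supported functions), then m.degree p = m.degree q and there exists j ∈ σ with c j ≠ 0 and d j ≠ 0 such that m.degree p lies in the support of b j; that is, p and q share a common reaction binomial which contains both of their leading terms. -/
/-- The leading exponent (multidegree) of a multivariate polynomial with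
respect to a monomial order `m`: the `m`-maximum of the support. -/
noncomputable def MonomialOrder.deg {σ : Type*} (m : MonomialOrder σ)
    {R : Type*} [CommSemiring R] (p : MvPolynomial σ R) : σ →₀ ℕ :=
  m.toSyn.symm (p.support.sup fun α => m.toSyn α)

lemma MonomialOrder.deg_mem_support {σ : Type*} (m : MonomialOrder σ)
    {R : Type*} [CommSemiring R] {p : MvPolynomial σ R} (hp : p ≠ 0) :
    m.deg p ∈ p.support := by
  obtain ⟨a, ha, hsup⟩ := Finset.exists_mem_eq_sup p.support
    (by simpa using hp) (fun α => m.toSyn α)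
  have : m.deg p = a := by simp [MonomialOrder.deg, hsup]
  rwa [this]

/-- claim inside Theorem 1: if `p` and `q` are nonzero linear
combinations of the reaction binomials and the leading monomial of `p` divides
the leading monomial of `q` (componentwise `≤` of exponent vectors), then the
two leading exponents are equal and `p`, `q` share a common reaction binomial
`b j` (occurring with nonzero coefficient in both) whose support contains the
common leading exponent. -/
theorem reducible_implies_shared_binomial
    {K X σ : Type*} [Fintype σ]
    (kf kb : σ → K) (μ ν : σ → (X →₀ ℕ))
    (hkf : Function.Injective kf) (hkb : Function.Injective kb)
    (hdisj : Disjoint (Set.range kf) (Set.range kb))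
    (b : σ → MvPolynomial (K ⊕ X) ℚ)
    (hb : ∀ j, b j =
      MvPolynomial.monomial
        (Finsupp.single (Sum.inl (kf j)) 1 + Finsupp.mapDomain Sum.inr (μ j)) (-1 : ℚ) +
      MvPolynomial.monomial
        (Finsupp.single (Sum.inl (kb j)) 1 + Finsupp.mapDomain Sum.inr (ν j)) (1 : ℚ))
    (m : MonomialOrder (K ⊕ X))
    (c d : σ → ℚ)
    (p q : MvPolynomial (K ⊕ X) ℚ)
    (hp : p = ∑ j : σ, (c j) • b j) (hq : q = ∑ j : σ, (d j) • b j)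
    (hp0 : p ≠ 0) (hq0 : q ≠ 0)
    (hdvd : m.deg p ≤ m.deg q) :
    m.deg p = m.deg q ∧
      ∃ j : σ, c j ≠ 0 ∧ d j ≠ 0 ∧ m.deg p ∈ (b j).support := by
  classical
  set αf : σ → ((K ⊕ X) →₀ ℕ) := fun j =>
    Finsupp.single (Sum.inl (kf j)) 1 + Finsupp.mapDomain Sum.inr (μ j) with hαf
  set αb : σ → ((K ⊕ X) →₀ ℕ) := fun j =>
    Finsupp.single (Sum.inl (kb j)) 1 + Finsupp.mapDomain Sum.inr (ν j) with hαb
  -- membership in the support of b j forces one of the two exponents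
  have hbsupp : ∀ j (α : (K ⊕ X) →₀ ℕ), α ∈ (b j).support → α = αf j ∨ α = αb j := by
    intro j α hα
    rw [hb j] at hα
    have := MvPolynomial.support_add hα
    simp only [MvPolynomial.support_monomial, if_neg (by norm_num : (-1 : ℚ) ≠ 0),
      if_neg (by norm_num : (1 : ℚ) ≠ 0), Finset.mem_union, Finset.mem_singleton] at this
    exact this
  -- membership in support of a combination gives a binomial with nonzero coeff
  have hsub : ∀ (e : σ → ℚ) (α : (K ⊕ X) →₀ ℕ),
      α ∈ (∑ j : σ, e j • b j).support → ∃ j, e j ≠ 0 ∧ α ∈ (b j).support := by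
    intro e α hα
    have := MvPolynomial.support_sum hα
    rw [Finset.mem_biUnion] at this
    obtain ⟨j, -, hj⟩ := this
    rw [MvPolynomial.mem_support_iff, MvPolynomial.coeff_smul, smul_eq_mul] at hj
    exact ⟨j, fun h => hj (by rw [h, zero_mul]),
      MvPolynomial.mem_support_iff.mpr (fun h => hj (by rw [h, mul_zero]))⟩
  -- the key comparison lemma : the K-variable is determined
  have key : ∀ (k k' : K) (v w : X →₀ ℕ),
      (Finsupp.single (Sum.inl k) 1 + Finsupp.mapDomain Sum.inr v : (K ⊕ X) →₀ ℕ) ≤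
        Finsupp.single (Sum.inl k') 1 + Finsupp.mapDomain Sum.inr w → k = k' := by
    intro k k' v w h
    have h1 : (Finsupp.single (Sum.inl k) 1 + Finsupp.mapDomain Sum.inr v :
        (K ⊕ X) →₀ ℕ) (Sum.inl k) ≤
        (Finsupp.single (Sum.inl k') 1 + Finsupp.mapDomain Sum.inr w :
        (K ⊕ X) →₀ ℕ) (Sum.inl k) := Finsupp.le_def.mp h (Sum.inl k)
    have hv : (Finsupp.mapDomain Sum.inr v : (K ⊕ X) →₀ ℕ) (Sum.inl k) = 0 :=
      Finsupp.mapDomain_notin_range _ _ (by simp)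
    have hw : (Finsupp.mapDomain Sum.inr w : (K ⊕ X) →₀ ℕ) (Sum.inl k) = 0 :=
      Finsupp.mapDomain_notin_range _ _ (by simp)
    simp only [Finsupp.add_apply, hv, hw, Finsupp.single_apply, add_zero] at h1
    by_contra hkk
    rw [if_pos trivial, if_neg (by simpa using (Ne.symm hkk))] at h1
    omega
  have hdp : m.deg p ∈ (∑ j : σ, c j • b j).support := by
    rw [← hp]; exact m.deg_mem_support hp0
  have hdq : m.deg q ∈ (∑ j : σ, d j • b j).support := by
    rw [← hq]; exact m.deg_mem_support hq0
  obtain ⟨jp, hcjp, hjp⟩ := hsub c _ hdp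
  obtain ⟨jq, hdjq, hjq⟩ := hsub d _ hdq
  have hfneq : ∀ j j', kf j ≠ kb j' := by
    intro j j' h
    exact Set.disjoint_left.mp hdisj ⟨j, rfl⟩ ⟨j', h.symm⟩
  rcases hbsupp jp _ hjp with hp1 | hp1 <;> rcases hbsupp jq _ hjq with hq1 | hq1
  · -- forward / forward
    have hk := key _ _ _ _ (hp1 ▸ hq1 ▸ hdvd)
    have hj : jp = jq := hkf hk
    subst hj
    exact ⟨by rw [hp1, hq1], jp, hcjp, hdjq, hjp⟩
  · exact absurd (key _ _ _ _ (hp1 ▸ hq1 ▸ hdvd)) (hfneq jp jq)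
  · exact absurd (key _ _ _ _ (hp1 ▸ hq1 ▸ hdvd)).symm (hfneq jq jp)
  · have hk := key _ _ _ _ (hp1 ▸ hq1 ▸ hdvd)
    have hj : jp = jq := hkb hk
    subst hj
    exact ⟨by rw [hp1, hq1], jp, hcjp, hdjq, hjp⟩
end

section
/- Sufficiency direction of Theorem 1, with explicit generators: assume X is finite, and suppose there is a set S ⊆ σ such that the row space of the binomial coefficient matrix c (the ℚ-linear span of the rows c x = (μ j x − ν j x)_{j ∈ σ} in (σ → ℚ)) equals the ℚ-linear span of the standard basis vectors { Pi.single j 1 : j ∈ S }. Then the steady state ideal I = Ideal.span { p x : x ∈ X }, where p x = Σ_{j ∈ σ} ((μ j x : ℤ) − ν j x) • b j, equals Ideal.span { b j : j ∈ S }. In particular, since each b j has exactly two monomials, I is unconditionally binomial, i.e., generated by a set of binomials in MvPolynomial (K ⊕ X) ℚ. -/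
/-- sufficiency direction of Theorem 1, with explicit
generators: if the row space of the binomial coefficient matrix `c` equals
the span of the standard basis vectors indexed by `S ⊆ σ`, then the steady
state ideal equals the ideal generated by the binomials `b j`, `j ∈ S`; in
particular it is unconditionally binomial. -/
theorem steady_state_ideal_binomial_of_row_space
    {K X σ : Type*} [Fintype σ] [Fintype X] [DecidableEq σ]
    (kf kb : σ → K) (μ ν : σ → (X →₀ ℕ))
    (hkf : Function.Injective kf) (hkb : Function.Injective kb)
    (hdisj : Disjoint (Set.range kf) (Set.range kb))
    (b : σ → MvPolynomial (K ⊕ X) ℚ)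
    (hb : ∀ j, b j =
      MvPolynomial.monomial
        (Finsupp.single (Sum.inl (kf j)) 1 + Finsupp.mapDomain Sum.inr (μ j)) (-1 : ℚ) +
      MvPolynomial.monomial
        (Finsupp.single (Sum.inl (kb j)) 1 + Finsupp.mapDomain Sum.inr (ν j)) (1 : ℚ))
    (p : X → MvPolynomial (K ⊕ X) ℚ)
    (hp : ∀ x, p x = ∑ j : σ, ((μ j x : ℤ) - (ν j x : ℤ)) • b j)
    (c : X → σ → ℚ)
    (hc : ∀ x j, c x j = (μ j x : ℚ) - (ν j x : ℚ))
    (S : Set σ)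
    (hS : Submodule.span ℚ (Set.range c) =
      Submodule.span ℚ ((fun j => Pi.single j (1 : ℚ)) '' S)) :
    Ideal.span (Set.range p) = Ideal.span (b '' S) ∧
      ∃ B : Set (MvPolynomial (K ⊕ X) ℚ),
        (∀ f ∈ B, f.support.card = 2) ∧
        Ideal.span (Set.range p) = Ideal.span B := by
  classical
  set φ : (σ → ℚ) →ₗ[ℚ] MvPolynomial (K ⊕ X) ℚ :=
    Fintype.linearCombination ℚ b with hφdef
  have hφ : ∀ v, φ v = ∑ j, v j • b j := fun v => Fintype.linearCombination_apply ℚ b v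
  have hpφ : ∀ x, p x = φ (c x) := by
    intro x
    rw [hp x, hφ]
    refine Finset.sum_congr rfl fun j _ => ?_
    rw [hc, ← Int.cast_smul_eq_zsmul ℚ]
    push_cast
    ring_nf
  have hbφ : ∀ j, b j = φ (Pi.single j 1) := by
    intro j
    rw [Fintype.linearCombination_apply_single, one_smul]
  -- ideal equality
  have hmain : Ideal.span (Set.range p) = Ideal.span (b '' S) := by
    apply le_antisymm
    · rw [Ideal.span_le]
      rintro f ⟨x, rfl⟩
      -- c x vanishes off S
      have hczero : ∀ j, j ∉ S → c x j = 0 := by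
        have hT : Submodule.span ℚ ((fun j => Pi.single j (1 : ℚ)) '' S) ≤
            { carrier := {v : σ → ℚ | ∀ j ∉ S, v j = 0},
              add_mem' := fun ha hb' j hj => by simp [ha j hj, hb' j hj],
              zero_mem' := fun j _ => rfl,
              smul_mem' := fun q v hv j hj => by simp [hv j hj] } := by
          rw [Submodule.span_le]
          rintro v ⟨i, hi, rfl⟩ j hj
          exact Pi.single_eq_of_ne (by rintro rfl; exact hj hi) 1
        have hcx : c x ∈ Submodule.span ℚ ((fun j => Pi.single j (1 : ℚ)) '' S) := by
          rw [← hS]; exact Submodule.subset_span ⟨x, rfl⟩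
        exact hT hcx
      rw [hpφ, hφ]
      refine Ideal.sum_mem _ fun j _ => ?_
      by_cases hj : j ∈ S
      · rw [MvPolynomial.smul_eq_C_mul]
        exact Ideal.mul_mem_left _ _ (Ideal.subset_span ⟨j, hj, rfl⟩)
      · rw [hczero j hj, zero_smul]
        exact Ideal.zero_mem _
    · rw [Ideal.span_le]
      rintro f ⟨j, hj, rfl⟩
      have hsingle : Pi.single j (1 : ℚ) ∈ Submodule.span ℚ (Set.range c) := by
        rw [hS]; exact Submodule.subset_span ⟨j, hj, rfl⟩
      obtain ⟨a, ha⟩ := (Submodule.mem_span_range_iff_exists_fun ℚ).1 hsingle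
      have : b j = ∑ x, a x • p x := by
        rw [hbφ, ← ha, map_sum]
        exact Finset.sum_congr rfl fun x _ => by rw [map_smul, hpφ]
      rw [this]
      refine Ideal.sum_mem _ fun x _ => ?_
      rw [MvPolynomial.smul_eq_C_mul]
      exact Ideal.mul_mem_left _ _ (Ideal.subset_span ⟨x, rfl⟩)
  refine ⟨hmain, b '' S, ?_, hmain⟩
  rintro f ⟨j, hj, rfl⟩
  rw [hb]
  set m1 := Finsupp.single (Sum.inl (kf j) : K ⊕ X) 1 + Finsupp.mapDomain Sum.inr (μ j)
  set m2 := Finsupp.single (Sum.inl (kb j) : K ⊕ X) 1 + Finsupp.mapDomain Sum.inr (ν j)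
  have hkfkb : kf j ≠ kb j := by
    intro h
    exact Set.disjoint_left.1 hdisj ⟨j, rfl⟩ ⟨j, h.symm⟩
  have hnot : ∀ (v : X →₀ ℕ) (k : K),
      Finsupp.mapDomain (Sum.inr : X → K ⊕ X) v (Sum.inl k) = 0 := by
    intro v k
    refine Finsupp.mapDomain_notin_range v _ ?_
    rintro ⟨x, hx⟩
    exact Sum.inr_ne_inl hx
  have hne : m1 ≠ m2 := by
    intro h
    have h1 : m1 (Sum.inl (kf j)) = 1 := by
      simp [m1, Finsupp.add_apply, Finsupp.single_eq_same, hnot]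
    have h2 : m2 (Sum.inl (kf j)) = 0 := by
      simp [m2, Finsupp.add_apply, hnot,
        Finsupp.single_eq_of_ne (fun h' => hkfkb (Sum.inl.inj h'))]
    rw [h] at h1
    rw [h1] at h2
    norm_num at h2
  have hsupp : (MvPolynomial.monomial m1 (-1 : ℚ) +
      MvPolynomial.monomial m2 (1 : ℚ)).support = {m1, m2} := by
    ext s
    simp only [MvPolynomial.mem_support_iff, MvPolynomial.coeff_add,
      MvPolynomial.coeff_monomial, Finset.mem_insert, Finset.mem_singleton]
    split_ifs with h1 h2 h2
    · exact absurd (h1.trans h2.symm) hne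
    · exact ⟨fun _ => Or.inl h1.symm, fun _ => by norm_num⟩
    · exact ⟨fun _ => Or.inr h2.symm, fun _ => by norm_num⟩
    · constructor
      · intro h; norm_num at h
      · rintro (rfl | rfl)
        · exact absurd rfl h1
        · exact absurd rfl h2
  rw [hsupp]
  rw [Finset.card_insert_of_notMem (by simp [hne]), Finset.card_singleton]
end

section
/- Theorem 1 (main theorem): assume X is finite. The steady state ideal I = Ideal.span { p x : x ∈ X } of the reversible chemical reaction network is unconditionally binomial — i.e., there exists a set B of polynomials in MvPolynomial (K ⊕ X) ℚ, each having support of cardinality exactly two, with I = Ideal.span B — if and only if there exists a set S ⊆ σ such that the row space of the binomial coefficient matrix c equals the ℚ-linear span of the standard basis vectors { Pi.single j 1 : j ∈ S }. (The right-hand condition is the paper's condition that the reduced row echelon form of the binomial coefficient matrix has at most one nonzero entry in each row.) -/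
namespace SSBAux

open MvPolynomial Finsupp

variable {K X : Type*}

/-- weight function: K-variables weight 1, X-variables weight 0 -/
def ww : K ⊕ X → ℕ := Sum.elim (fun _ => 1) (fun _ => 0)

lemma mapDomain_inl_apply (d : X →₀ ℕ) (k : K) :
    (Finsupp.mapDomain (Sum.inr : X → K ⊕ X) d) (Sum.inl k) = 0 :=
  Finsupp.mapDomain_notin_range _ _ (by simp)

lemma coord_inl [DecidableEq (K ⊕ X)] [DecidableEq K] (k k' : K) (d : X →₀ ℕ) :
    ((Finsupp.single (Sum.inl k' : K ⊕ X) 1 + Finsupp.mapDomain Sum.inr d : (K ⊕ X) →₀ ℕ))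
      (Sum.inl k) = if k' = k then 1 else 0 := by
  rw [Finsupp.add_apply, mapDomain_inl_apply, Finsupp.single_apply]
  simp

lemma weight_inr (d : X →₀ ℕ) :
    (Finsupp.weight (ww (K := K) (X := X))) (Finsupp.mapDomain Sum.inr d) = 0 := by
  rw [Finsupp.weight_apply, Finsupp.sum]
  apply Finset.sum_eq_zero
  intro i hi
  rcases i with k | x
  · simp [mapDomain_inl_apply] at hi
  · simp [ww]

lemma weight_mexp (k : K) (d : X →₀ ℕ) :
    (Finsupp.weight ww) (Finsupp.single (Sum.inl k : K ⊕ X) 1 + Finsupp.mapDomain Sum.inr d)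
      = 1 := by
  rw [map_add, weight_inr]
  rw [Finsupp.weight_apply, Finsupp.sum_single_index] <;> simp [ww]

lemma apply_inl_of_weight_zero {γ : (K ⊕ X) →₀ ℕ}
    (h : (Finsupp.weight (ww (K := K) (X := X))) γ = 0) (k : K) : γ (Sum.inl k) = 0 := by
  by_contra hne
  rw [Finsupp.weight_apply, Finsupp.sum] at h
  have hmem : Sum.inl k ∈ γ.support := Finsupp.mem_support_iff.2 hne
  have := (Finset.sum_eq_zero_iff.mp h) _ hmem
  simp [ww] at this
  exact hne this

section whc

variable {S : Type*} {w : S → ℕ}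

lemma whc_mul_homog {φ h : MvPolynomial S ℚ} {e n : ℕ}
    (hφ : IsWeightedHomogeneous w φ e) (hen : e ≤ n) :
    weightedHomogeneousComponent w n (h * φ)
      = weightedHomogeneousComponent w (n - e) h * φ := by
  classical
  apply MvPolynomial.ext
  intro d
  rw [coeff_weightedHomogeneousComponent, coeff_mul, coeff_mul]
  have key : ∀ x ∈ Finset.HasAntidiagonal.antidiagonal d,
      (if (Finsupp.weight w) d = n then coeff x.1 h * coeff x.2 φ else 0)
        = coeff x.1 (weightedHomogeneousComponent w (n - e) h) * coeff x.2 φ := by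
    intro x hx
    rw [Finset.HasAntidiagonal.mem_antidiagonal] at hx
    rw [coeff_weightedHomogeneousComponent]
    by_cases h2 : coeff x.2 φ = 0
    · simp [h2]
    · have hw2 : (Finsupp.weight w) x.2 = e := hφ h2
      have hd : (Finsupp.weight w) d = (Finsupp.weight w) x.1 + e := by
        rw [← hx, map_add, hw2]
      by_cases h1 : (Finsupp.weight w) x.1 = n - e
      · have : (Finsupp.weight w) d = n := by omega
        simp [h1, this]
      · have : (Finsupp.weight w) d ≠ n := by omega
        simp [h1, this]
  rw [← Finset.sum_congr rfl key]
  split_ifs with hd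
  · simp
  · simp

lemma whc_mul_homog_zero {φ h : MvPolynomial S ℚ} {e n : ℕ}
    (hφ : IsWeightedHomogeneous w φ e) (hne : n < e) :
    weightedHomogeneousComponent w n (h * φ) = 0 := by
  classical
  apply MvPolynomial.ext
  intro d
  rw [coeff_weightedHomogeneousComponent, coeff_zero, coeff_mul]
  split_ifs with hd
  · apply Finset.sum_eq_zero
    intro x hx
    rw [Finset.HasAntidiagonal.mem_antidiagonal] at hx
    by_cases h2 : coeff x.2 φ = 0
    · simp [h2]
    · have hw2 : (Finsupp.weight w) x.2 = e := hφ h2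
      have : (Finsupp.weight w) d = (Finsupp.weight w) x.1 + e := by
        rw [← hx, map_add, hw2]
      omega
  · rfl

lemma whc_self {φ : MvPolynomial S ℚ} {e : ℕ} (hφ : IsWeightedHomogeneous w φ e) :
    weightedHomogeneousComponent w e φ = φ := by
  classical
  apply MvPolynomial.ext
  intro d
  rw [coeff_weightedHomogeneousComponent]
  split_ifs with hd
  · rfl
  · by_contra hc
    exact hd (hφ fun h => hc h.symm)

end whc

lemma ideal_span_eq_of_span_eq {R : Type*} [CommRing R] [Algebra ℚ R] {s t : Set R}
    (h : Submodule.span ℚ s = Submodule.span ℚ t) : Ideal.span s = Ideal.span t := by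
  have key : ∀ u : Set R, Submodule.span ℚ u ≤ (Ideal.span u).restrictScalars ℚ := by
    intro u
    rw [Submodule.span_le]
    exact fun g hg => Ideal.subset_span hg
  apply le_antisymm <;> rw [Ideal.span_le] <;> intro f hf
  · exact key t (h ▸ Submodule.subset_span hf)
  · exact key s (h ▸ Submodule.subset_span hf)

end SSBAux
open MvPolynomial Finsupp SSBAux

/-- Theorem 1, main theorem: the steady state ideal of a
reversible chemical reaction network is unconditionally binomial (generated
by a set of polynomials each having exactly two monomials) if and only if the
row space of its binomial coefficient matrix is the span of a set of standard
basis vectors (equivalently, the reduced row echelon form of the matrix has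
at most one nonzero entry in each row). -/
theorem steady_state_ideal_binomial_iff
    {K X σ : Type*} [Fintype σ] [Fintype X] [DecidableEq σ]
    (kf kb : σ → K) (μ ν : σ → (X →₀ ℕ))
    (hkf : Function.Injective kf) (hkb : Function.Injective kb)
    (hdisj : Disjoint (Set.range kf) (Set.range kb))
    (b : σ → MvPolynomial (K ⊕ X) ℚ)
    (hb : ∀ j, b j =
      MvPolynomial.monomial
        (Finsupp.single (Sum.inl (kf j)) 1 + Finsupp.mapDomain Sum.inr (μ j)) (-1 : ℚ) +
      MvPolynomial.monomial
        (Finsupp.single (Sum.inl (kb j)) 1 + Finsupp.mapDomain Sum.inr (ν j)) (1 : ℚ))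
    (p : X → MvPolynomial (K ⊕ X) ℚ)
    (hp : ∀ x, p x = ∑ j : σ, ((μ j x : ℤ) - (ν j x : ℤ)) • b j)
    (c : X → σ → ℚ)
    (hc : ∀ x j, c x j = (μ j x : ℚ) - (ν j x : ℚ)) :
    (∃ B : Set (MvPolynomial (K ⊕ X) ℚ),
        (∀ f ∈ B, f.support.card = 2) ∧
        Ideal.span (Set.range p) = Ideal.span B) ↔
      (∃ S : Set σ, Submodule.span ℚ (Set.range c) =
        Submodule.span ℚ ((fun j => Pi.single j (1 : ℚ)) '' S)) := by
  classical
  -- the exponent vectors of the two monomials of `b j`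
  set mf : σ → ((K ⊕ X) →₀ ℕ) :=
    fun j => Finsupp.single (Sum.inl (kf j)) 1 + Finsupp.mapDomain Sum.inr (μ j) with hmf
  set mb : σ → ((K ⊕ X) →₀ ℕ) :=
    fun j => Finsupp.single (Sum.inl (kb j)) 1 + Finsupp.mapDomain Sum.inr (ν j) with hmbd
  have hkfb : ∀ i j, kf i ≠ kb j := by
    intro i j h
    exact Set.disjoint_left.1 hdisj ⟨i, rfl⟩ ⟨j, h.symm⟩
  -- coordinate values
  have hval1 : ∀ i j, (mf j) (Sum.inl (kf i)) = if j = i then 1 else 0 := by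
    intro i j
    rw [hmf]
    rw [coord_inl]
    simp [hkf.eq_iff]
  have hval2 : ∀ i j, (mf j) (Sum.inl (kb i)) = 0 := by
    intro i j
    rw [hmf]; rw [coord_inl]
    simp [hkfb j i]
  have hval3 : ∀ i j, (mb j) (Sum.inl (kb i)) = if j = i then 1 else 0 := by
    intro i j
    rw [hmbd]; rw [coord_inl]
    simp [hkb.eq_iff]
  have hval4 : ∀ i j, (mb j) (Sum.inl (kf i)) = 0 := by
    intro i j
    rw [hmbd]; rw [coord_inl]
    simp [(hkfb i j).symm]
  have hmfb : ∀ i j, mf i ≠ mb j := by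
    intro i j h
    have h2 : (mf i) (Sum.inl (kf i)) = (mb j) (Sum.inl (kf i)) := by rw [h]
    rw [hval1 i i, hval4 i j, if_pos rfl] at h2
    exact one_ne_zero h2
  have hbj : ∀ j, b j = monomial (mf j) (-1 : ℚ) + monomial (mb j) 1 := by
    intro j; rw [hb]
  -- `p x` as a ℚ-linear combination of the `b j`
  have hpc : ∀ x, p x = ∑ j : σ, c x j • b j := by
    intro x
    rw [hp]
    apply Finset.sum_congr rfl
    intro j _
    rw [← Int.cast_smul_eq_zsmul ℚ]
    congr 1
    rw [hc]
    push_cast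
    ring
  -- support of b j
  have hsuppb : ∀ j, (b j).support = {mf j, mb j} := by
    intro j
    ext α
    simp only [MvPolynomial.mem_support_iff, hbj, coeff_add, coeff_monomial,
      Finset.mem_insert, Finset.mem_singleton]
    split_ifs with h1 h2 h2
    · exact absurd (h1.trans h2.symm) (hmfb j j)
    · constructor
      · intro _; exact Or.inl h1.symm
      · intro _; norm_num
    · constructor
      · intro _; exact Or.inr h2.symm
      · intro _; norm_num
    · constructor
      · intro hh; exact absurd (by norm_num : (0:ℚ) + 0 = 0) hh
      · rintro (rfl | rfl)
        · exact absurd rfl h1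
        · exact absurd rfl h2
  have hsuppcard : ∀ j, (b j).support.card = 2 := by
    intro j
    rw [hsuppb, Finset.card_insert_of_notMem (by simp [hmfb j j]), Finset.card_singleton]
  constructor
  · rintro ⟨B, hB2, hBI⟩
    -- evaluation at the all-ones point kills the ideal
    have hbeval : ∀ j, aeval (fun _ => (1:ℚ)) (b j) = 0 := by
      intro j
      rw [hbj]
      simp [aeval_monomial, MvPolynomial.eval_monomial, Finsupp.prod]
    have hE1 : ∀ f ∈ Ideal.span (Set.range p), aeval (fun _ => (1:ℚ)) f = 0 := by
      intro f hf
      have hle : Ideal.span (Set.range p) ≤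
          RingHom.ker ((aeval (fun _ => (1:ℚ)) : MvPolynomial (K ⊕ X) ℚ →ₐ[ℚ] ℚ) :
            MvPolynomial (K ⊕ X) ℚ →+* ℚ) := by
        rw [Ideal.span_le]
        rintro g ⟨x, rfl⟩
        have hpx : aeval (fun _ => (1:ℚ)) (p x) = 0 := by
          rw [hpc, map_sum]
          apply Finset.sum_eq_zero
          intro j _
          rw [map_smul, hbeval, smul_zero]
        simpa [RingHom.mem_ker] using hpx
      simpa [RingHom.mem_ker] using hle hf
    have hnomono : ∀ (α : (K ⊕ X) →₀ ℕ) (a : ℚ),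
        (monomial α a : MvPolynomial (K ⊕ X) ℚ) ∈ Ideal.span (Set.range p) → a = 0 := by
      intro α a hmem
      have h := hE1 _ hmem
      simpa [aeval_monomial] using h
    -- the substitution killing all K-variables
    set g2 : K ⊕ X → MvPolynomial (K ⊕ X) ℚ :=
      Sum.elim (fun _ => 0) (fun x => MvPolynomial.X (Sum.inr x)) with hg2
    have hg2b : ∀ j, aeval g2 (b j) = 0 := by
      intro j
      rw [hbj, map_add, aeval_monomial, aeval_monomial]
      have h1 : ((mf j).prod fun i n => g2 i ^ n) = 0 := by
        apply Finset.prod_eq_zero (i := Sum.inl (kf j))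
        · rw [Finsupp.mem_support_iff, hval1 j j, if_pos rfl]
          norm_num
        · rw [hval1 j j, if_pos rfl]
          simp [hg2]
      have h2 : ((mb j).prod fun i n => g2 i ^ n) = 0 := by
        apply Finset.prod_eq_zero (i := Sum.inl (kb j))
        · rw [Finsupp.mem_support_iff, hval3 j j, if_pos rfl]
          norm_num
        · rw [hval3 j j, if_pos rfl]
          simp [hg2]
      rw [h1, h2]
      ring
    have hg2I : ∀ f ∈ Ideal.span (Set.range p), aeval g2 f = 0 := by
      intro f hf
      have hle : Ideal.span (Set.range p) ≤
          RingHom.ker ((aeval g2 : MvPolynomial (K ⊕ X) ℚ →ₐ[ℚ] MvPolynomial (K ⊕ X) ℚ) :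
            MvPolynomial (K ⊕ X) ℚ →+* MvPolynomial (K ⊕ X) ℚ) := by
        rw [Ideal.span_le]
        rintro g ⟨x, rfl⟩
        have hpx : aeval g2 (p x) = 0 := by
          rw [hpc, map_sum]
          apply Finset.sum_eq_zero
          intro j _
          rw [map_smul, hg2b, smul_zero]
        simpa [RingHom.mem_ker] using hpx
      simpa [RingHom.mem_ker] using hle hf
    have hfix : ∀ f : MvPolynomial (K ⊕ X) ℚ, IsWeightedHomogeneous ww f 0 →
        aeval g2 f = f := by
      intro f hf
      conv_lhs => rw [MvPolynomial.as_sum f]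
      rw [map_sum]
      conv_rhs => rw [MvPolynomial.as_sum f]
      apply Finset.sum_congr rfl
      intro α hα
      have hα0 : ∀ k, α (Sum.inl k) = 0 :=
        apply_inl_of_weight_zero (hf (MvPolynomial.mem_support_iff.1 hα))
      rw [aeval_monomial, monomial_eq, MvPolynomial.algebraMap_eq]
      congr 1
      apply Finsupp.prod_congr
      intro i hi
      rcases i with k | x
      · exact absurd (Finsupp.mem_support_iff.1 hi) (by simp [hα0 k])
      · simp [hg2]
    -- homogeneity
    have hbhom : ∀ j, (b j) ∈ weightedHomogeneousSubmodule ℚ ww 1 := by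
      intro j
      rw [hbj]
      apply Submodule.add_mem
      · rw [mem_weightedHomogeneousSubmodule]
        exact isWeightedHomogeneous_monomial _ _ _ (weight_mexp _ _)
      · rw [mem_weightedHomogeneousSubmodule]
        exact isWeightedHomogeneous_monomial _ _ _ (weight_mexp _ _)
    have hphom : ∀ x, IsWeightedHomogeneous ww (p x) 1 := by
      intro x
      rw [← mem_weightedHomogeneousSubmodule, hpc]
      exact Submodule.sum_mem _ (fun j _ => Submodule.smul_mem _ _ (hbhom j))
    -- homogeneous components of ideal members stay in the ideal
    have hcomp : ∀ f ∈ Ideal.span (Set.range p), ∀ n,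
        weightedHomogeneousComponent ww n f ∈ Ideal.span (Set.range p) := by
      intro f hf n
      obtain ⟨g, hg⟩ := Ideal.mem_span_range_iff_exists_fun.mp hf
      rw [← hg, map_sum]
      apply Ideal.sum_mem
      intro x _
      rcases Nat.eq_zero_or_pos n with hn | hn
      · rw [hn, whc_mul_homog_zero (hphom x) (by norm_num)]
        exact Ideal.zero_mem _
      · rw [whc_mul_homog (hphom x) hn]
        exact Ideal.mul_mem_left _ _ (Ideal.subset_span ⟨x, rfl⟩)
    -- every binomial in the ideal is weighted homogeneous of degree ≥ 1
    have hstep1 : ∀ f ∈ Ideal.span (Set.range p), f.support.card = 2 →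
        ∃ d, 1 ≤ d ∧ IsWeightedHomogeneous ww f d := by
      intro f hfI hcard
      obtain ⟨α₁, α₂, hne, hsupp⟩ := Finset.card_eq_two.mp hcard
      have hmem1 : α₁ ∈ f.support := by rw [hsupp]; simp
      by_cases hd : (Finsupp.weight ww) α₁ = (Finsupp.weight ww) α₂
      · refine ⟨(Finsupp.weight ww) α₁, ?_, ?_⟩
        · by_contra hlt
          push_neg at hlt
          have h0 : IsWeightedHomogeneous ww f 0 := by
            intro β hβ
            have hm : β ∈ f.support := MvPolynomial.mem_support_iff.2 hβ
            rw [hsupp] at hm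
            rcases Finset.mem_insert.mp hm with rfl | hm
            · omega
            · rw [Finset.mem_singleton] at hm
              subst hm
              omega
          have hfe := hfix f h0
          rw [hg2I f hfI] at hfe
          rw [← hfe] at hmem1
          simp at hmem1
        · intro β hβ
          have hm : β ∈ f.support := MvPolynomial.mem_support_iff.2 hβ
          rw [hsupp] at hm
          rcases Finset.mem_insert.mp hm with rfl | hm
          · rfl
          · rw [Finset.mem_singleton] at hm
            subst hm
            exact hd.symm
      · exfalso
        have hwhc : weightedHomogeneousComponent ww ((Finsupp.weight ww) α₁) f
            = monomial α₁ (coeff α₁ f) := by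
          apply MvPolynomial.ext
          intro β
          rw [coeff_weightedHomogeneousComponent, coeff_monomial]
          by_cases hb1 : β = α₁
          · subst hb1
            simp
          · have hr : (if α₁ = β then coeff α₁ f else 0) = 0 :=
              if_neg (fun h : α₁ = β => hb1 h.symm)
            rw [hr]
            split_ifs with hw
            · by_contra hcβ
              have hm : β ∈ f.support := MvPolynomial.mem_support_iff.2 hcβ
              rw [hsupp] at hm
              rcases Finset.mem_insert.mp hm with rfl | hm
              · exact hb1 rfl
              · rw [Finset.mem_singleton] at hm
                subst hm
                exact hd hw.symm
            · rfl
        have hmono := hnomono α₁ (coeff α₁ f) (hwhc ▸ hcomp f hfI _)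
        exact (MvPolynomial.mem_support_iff.1 hmem1) hmono
    -- key coefficient computations
    have hkey : ∀ (q : MvPolynomial (K ⊕ X) ℚ) (γ : (K ⊕ X) →₀ ℕ),
        (∀ k, γ (Sum.inl k) = 0) → ∀ i i',
        coeff (γ + mf i) (q * b i') = if i' = i then -(coeff γ q) else 0 := by
      intro q γ hγ i i'
      rw [hbj i', mul_add, coeff_add, coeff_mul_monomial', coeff_mul_monomial']
      by_cases hii : i' = i
      · subst hii
        have hnle : ¬ mb i' ≤ γ + mf i' := by
          intro hle
          have h1 := Finsupp.le_def.mp hle (Sum.inl (kb i'))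
          have e1 : (mb i') (Sum.inl (kb i')) = 1 := by rw [hval3 i' i', if_pos rfl]
          have e2 : (γ + mf i') (Sum.inl (kb i')) = 0 := by
            rw [Finsupp.add_apply, hγ (kb i'), hval2 i' i']
          rw [e1, e2] at h1
          omega
        rw [if_pos (self_le_add_left _ _), add_tsub_cancel_right, if_neg hnle, if_pos rfl]
        ring
      · have hnle1 : ¬ mf i' ≤ γ + mf i := by
          intro hle
          have h1 := Finsupp.le_def.mp hle (Sum.inl (kf i'))
          have e1 : (mf i') (Sum.inl (kf i')) = 1 := by rw [hval1 i' i', if_pos rfl]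
          have e2 : (γ + mf i) (Sum.inl (kf i')) = 0 := by
            rw [Finsupp.add_apply, hγ (kf i'), hval1 i' i, if_neg (fun h => hii h.symm)]
          rw [e1, e2] at h1
          omega
        have hnle2 : ¬ mb i' ≤ γ + mf i := by
          intro hle
          have h1 := Finsupp.le_def.mp hle (Sum.inl (kb i'))
          have e1 : (mb i') (Sum.inl (kb i')) = 1 := by rw [hval3 i' i', if_pos rfl]
          have e2 : (γ + mf i) (Sum.inl (kb i')) = 0 := by
            rw [Finsupp.add_apply, hγ (kb i'), hval2 i' i]
          rw [e1, e2] at h1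
          omega
        rw [if_neg hnle1, if_neg hnle2, if_neg hii]
        ring
    have hkeyb : ∀ (q : MvPolynomial (K ⊕ X) ℚ) (γ : (K ⊕ X) →₀ ℕ),
        (∀ k, γ (Sum.inl k) = 0) → ∀ i i',
        coeff (γ + mb i) (q * b i') = if i' = i then (coeff γ q) else 0 := by
      intro q γ hγ i i'
      rw [hbj i', mul_add, coeff_add, coeff_mul_monomial', coeff_mul_monomial']
      by_cases hii : i' = i
      · subst hii
        have hnle : ¬ mf i' ≤ γ + mb i' := by
          intro hle
          have h1 := Finsupp.le_def.mp hle (Sum.inl (kf i'))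
          have e1 : (mf i') (Sum.inl (kf i')) = 1 := by rw [hval1 i' i', if_pos rfl]
          have e2 : (γ + mb i') (Sum.inl (kf i')) = 0 := by
            rw [Finsupp.add_apply, hγ (kf i'), hval4 i' i']
          rw [e1, e2] at h1
          omega
        rw [if_pos (self_le_add_left _ _), add_tsub_cancel_right, if_neg hnle, if_pos rfl]
        ring
      · have hnle1 : ¬ mf i' ≤ γ + mb i := by
          intro hle
          have h1 := Finsupp.le_def.mp hle (Sum.inl (kf i'))
          have e1 : (mf i') (Sum.inl (kf i')) = 1 := by rw [hval1 i' i', if_pos rfl]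
          have e2 : (γ + mb i) (Sum.inl (kf i')) = 0 := by
            rw [Finsupp.add_apply, hγ (kf i'), hval4 i' i]
          rw [e1, e2] at h1
          omega
        have hnle2 : ¬ mb i' ≤ γ + mb i := by
          intro hle
          have h1 := Finsupp.le_def.mp hle (Sum.inl (kb i'))
          have e1 : (mb i') (Sum.inl (kb i')) = 1 := by rw [hval3 i' i', if_pos rfl]
          have e2 : (γ + mb i) (Sum.inl (kb i')) = 0 := by
            rw [Finsupp.add_apply, hγ (kb i'), hval3 i' i, if_neg (fun h => hii h.symm)]
          rw [e1, e2] at h1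
          omega
        rw [if_neg hnle1, if_neg hnle2, if_neg hii]
        ring
    -- classification of degree-1 binomials in the ideal
    have hclass : ∀ f ∈ Ideal.span (Set.range p), f.support.card = 2 →
        IsWeightedHomogeneous ww f 1 →
        ∃ (i₀ : σ) (q : MvPolynomial (K ⊕ X) ℚ), IsWeightedHomogeneous ww q 0 ∧
          f = q * b i₀ ∧ (Pi.single i₀ 1 : σ → ℚ) ∈ Submodule.span ℚ (Set.range c) := by
      intro f hfI hcard hhom
      obtain ⟨h', hrep⟩ := Ideal.mem_span_range_iff_exists_fun.mp hfI
      set q : X → MvPolynomial (K ⊕ X) ℚ :=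
        fun x => weightedHomogeneousComponent ww 0 (h' x) with hqd
      have hq0 : ∀ x, IsWeightedHomogeneous ww (q x) 0 := fun x =>
        weightedHomogeneousComponent_isWeightedHomogeneous 0 (h' x)
      have hf1 : f = ∑ x : X, q x * p x := by
        conv_lhs => rw [← whc_self hhom, ← hrep]
        rw [map_sum]
        apply Finset.sum_congr rfl
        intro x _
        rw [whc_mul_homog (hphom x) le_rfl]
      set G : σ → MvPolynomial (K ⊕ X) ℚ := fun i => ∑ x : X, c x i • q x with hGd
      have hG0 : ∀ i, IsWeightedHomogeneous ww (G i) 0 := by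
        intro i
        rw [← mem_weightedHomogeneousSubmodule]
        exact Submodule.sum_mem _ fun x _ => Submodule.smul_mem _ _
          ((mem_weightedHomogeneousSubmodule _ _ _ _).2 (hq0 x))
      have hfG : f = ∑ i : σ, G i * b i := by
        rw [hf1]
        have h1 : ∀ x : X, q x * p x = ∑ i : σ, c x i • (q x * b i) := by
          intro x
          rw [hpc x, Finset.mul_sum]
          exact Finset.sum_congr rfl fun i _ => mul_smul_comm _ _ _
        rw [Finset.sum_congr rfl fun x _ => h1 x, Finset.sum_comm]
        apply Finset.sum_congr rfl
        intro i _
        rw [Finset.sum_mul]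
        exact Finset.sum_congr rfl fun x _ => (smul_mul_assoc _ _ _).symm
      have hGfree : ∀ i, ∀ γ ∈ (G i).support, ∀ k, γ (Sum.inl k) = 0 := by
        intro i γ hγ k
        exact apply_inl_of_weight_zero (hG0 i (MvPolynomial.mem_support_iff.1 hγ)) k
      have hcf : ∀ i (γ : (K ⊕ X) →₀ ℕ), (∀ k, γ (Sum.inl k) = 0) →
          coeff (γ + mf i) f = -(coeff γ (G i)) := by
        intro i γ hγf
        rw [hfG, MvPolynomial.coeff_sum]
        rw [Finset.sum_congr rfl fun i' _ => hkey (G i') γ hγf i i']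
        simp
      have hcb : ∀ i (γ : (K ⊕ X) →₀ ℕ), (∀ k, γ (Sum.inl k) = 0) →
          coeff (γ + mb i) f = coeff γ (G i) := by
        intro i γ hγf
        rw [hfG, MvPolynomial.coeff_sum]
        rw [Finset.sum_congr rfl fun i' _ => hkeyb (G i') γ hγf i i']
        simp
      have hmemf : ∀ i, ∀ γ ∈ (G i).support,
          (γ + mf i) ∈ f.support ∧ (γ + mb i) ∈ f.support := by
        intro i γ hγ
        constructor
        · rw [MvPolynomial.mem_support_iff, hcf i γ (hGfree i γ hγ)]
          simpa using MvPolynomial.mem_support_iff.1 hγ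
        · rw [MvPolynomial.mem_support_iff, hcb i γ (hGfree i γ hγ)]
          exact MvPolynomial.mem_support_iff.1 hγ
      have hd1 : ∀ (i i' : σ) (γ γ' : (K ⊕ X) →₀ ℕ), (∀ k, γ (Sum.inl k) = 0) →
          (∀ k, γ' (Sum.inl k) = 0) → (γ + mf i) ≠ (γ' + mb i') := by
        intro i i' γ γ' hγ hγ' h
        have h2 := DFunLike.congr_fun h (Sum.inl (kf i))
        have e1 : (γ + mf i) (Sum.inl (kf i)) = 1 := by
          rw [Finsupp.add_apply, hγ (kf i), hval1 i i, if_pos rfl]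
        have e2 : (γ' + mb i') (Sum.inl (kf i)) = 0 := by
          rw [Finsupp.add_apply, hγ' (kf i), hval4 i i']
        rw [e1, e2] at h2
        omega
      have hd2 : ∀ (i i' : σ) (γ γ' : (K ⊕ X) →₀ ℕ), i ≠ i' → (∀ k, γ (Sum.inl k) = 0) →
          (∀ k, γ' (Sum.inl k) = 0) → (γ + mf i) ≠ (γ' + mf i') := by
        intro i i' γ γ' hii hγ hγ' h
        have h2 := DFunLike.congr_fun h (Sum.inl (kf i))
        have e1 : (γ + mf i) (Sum.inl (kf i)) = 1 := by
          rw [Finsupp.add_apply, hγ (kf i), hval1 i i, if_pos rfl]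
        have e2 : (γ' + mf i') (Sum.inl (kf i)) = 0 := by
          rw [Finsupp.add_apply, hγ' (kf i), hval1 i i', if_neg (fun hh => hii hh.symm)]
        rw [e1, e2] at h2
        omega
      have hex : ∃ i₀, G i₀ ≠ 0 := by
        by_contra hall
        push_neg at hall
        have hf0 : f = 0 := by
          rw [hfG]
          apply Finset.sum_eq_zero
          intro i _
          rw [hall i, zero_mul]
        rw [hf0] at hcard
        simp at hcard
      obtain ⟨i₀, hi₀⟩ := hex
      obtain ⟨γ₀, hγ₀⟩ := MvPolynomial.support_nonempty.2 hi₀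
      have huniq : ∀ i, G i ≠ 0 → i = i₀ := by
        intro i hi
        by_contra hne'
        obtain ⟨γ, hγ⟩ := MvPolynomial.support_nonempty.2 hi
        have hA := (hmemf i γ hγ).1
        have hB := (hmemf i γ hγ).2
        have hC := (hmemf i₀ γ₀ hγ₀).1
        have d1 : γ + mf i ≠ γ + mb i :=
          hd1 i i γ γ (hGfree i γ hγ) (hGfree i γ hγ)
        have d2 : γ + mf i ≠ γ₀ + mf i₀ :=
          hd2 i i₀ γ γ₀ hne' (hGfree i γ hγ) (hGfree i₀ γ₀ hγ₀)
        have d3 : γ₀ + mf i₀ ≠ γ + mb i :=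
          hd1 i₀ i γ₀ γ (hGfree i₀ γ₀ hγ₀) (hGfree i γ hγ)
        have hsub : ({γ + mf i, γ + mb i, γ₀ + mf i₀} : Finset ((K ⊕ X) →₀ ℕ)) ⊆ f.support := by
          intro β hβ
          simp only [Finset.mem_insert, Finset.mem_singleton] at hβ
          rcases hβ with rfl | rfl | rfl <;> assumption
        have hcard3 : ({γ + mf i, γ + mb i, γ₀ + mf i₀} : Finset ((K ⊕ X) →₀ ℕ)).card = 3 := by
          rw [Finset.card_insert_of_notMem (by simp [d1, d2]),
            Finset.card_insert_of_notMem (by simp [Ne.symm d3]), Finset.card_singleton]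
        have hle := Finset.card_le_card hsub
        rw [hcard3, hcard] at hle
        omega
      have hsing : ∀ γ ∈ (G i₀).support, γ = γ₀ := by
        intro γ hγ
        by_contra hne'
        have hA := (hmemf i₀ γ hγ).1
        have hB := (hmemf i₀ γ₀ hγ₀).1
        have hC := (hmemf i₀ γ hγ).2
        have d1 : γ + mf i₀ ≠ γ₀ + mf i₀ := fun h => hne' (add_right_cancel h)
        have d2 : γ + mf i₀ ≠ γ + mb i₀ :=
          hd1 i₀ i₀ γ γ (hGfree i₀ γ hγ) (hGfree i₀ γ hγ)
        have d3 : γ₀ + mf i₀ ≠ γ + mb i₀ :=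
          hd1 i₀ i₀ γ₀ γ (hGfree i₀ γ₀ hγ₀) (hGfree i₀ γ hγ)
        have hsub : ({γ + mf i₀, γ₀ + mf i₀, γ + mb i₀} : Finset ((K ⊕ X) →₀ ℕ)) ⊆ f.support := by
          intro β hβ
          simp only [Finset.mem_insert, Finset.mem_singleton] at hβ
          rcases hβ with rfl | rfl | rfl <;> assumption
        have hcard3 : ({γ + mf i₀, γ₀ + mf i₀, γ + mb i₀} : Finset ((K ⊕ X) →₀ ℕ)).card = 3 := by
          rw [Finset.card_insert_of_notMem (by simp [d1, d2]),
            Finset.card_insert_of_notMem (by simp [d3]), Finset.card_singleton]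
        have hle := Finset.card_le_card hsub
        rw [hcard3, hcard] at hle
        omega
      have ha : coeff γ₀ (G i₀) ≠ 0 := MvPolynomial.mem_support_iff.1 hγ₀
      have hGm : G i₀ = monomial γ₀ (coeff γ₀ (G i₀)) := by
        apply MvPolynomial.ext
        intro β
        rw [coeff_monomial]
        split_ifs with hβ
        · rw [← hβ]
        · by_contra hc0
          exact (fun hh => hβ hh.symm) (hsing β (MvPolynomial.mem_support_iff.2 hc0))
      have hfact : f = G i₀ * b i₀ := by
        rw [hfG]
        apply Finset.sum_eq_single i₀
        · intro i _ hne'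
          have hGi : G i = 0 := by
            by_contra hne''
            exact hne' (huniq i hne'')
          rw [hGi, zero_mul]
        · intro h
          exact absurd (Finset.mem_univ i₀) h
      have hvec : (Pi.single i₀ (coeff γ₀ (G i₀)) : σ → ℚ) ∈ Submodule.span ℚ (Set.range c) := by
        have hv : (fun i => aeval (fun _ => (1:ℚ)) (G i)) =
            (Pi.single i₀ (coeff γ₀ (G i₀)) : σ → ℚ) := by
          funext i
          rcases eq_or_ne i i₀ with rfl | hne'
          · rw [hGm, Pi.single_eq_same]
            simp [aeval_monomial, Finsupp.prod]
          · have hGi : G i = 0 := by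
              by_contra hne''
              exact hne' (huniq i hne'')
            rw [hGi, map_zero, Pi.single_eq_of_ne hne']
        rw [← hv]
        have hv2 : (fun i => aeval (fun _ => (1:ℚ)) (G i)) =
            ∑ x : X, (aeval (fun _ => (1:ℚ)) (q x)) • c x := by
          funext i
          rw [Finset.sum_apply]
          rw [hGd]
          simp only [map_sum, map_smul, smul_eq_mul, Pi.smul_apply]
          exact Finset.sum_congr rfl fun x _ => mul_comm _ _
        rw [hv2]
        exact Submodule.sum_mem _ fun x _ =>
          Submodule.smul_mem _ _ (Submodule.subset_span ⟨x, rfl⟩)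
      refine ⟨i₀, G i₀, hG0 i₀, hfact, ?_⟩
      have hone : (Pi.single i₀ 1 : σ → ℚ) =
          (coeff γ₀ (G i₀))⁻¹ • (Pi.single i₀ (coeff γ₀ (G i₀)) : σ → ℚ) := by
        rw [← Pi.single_smul, smul_eq_mul, inv_mul_cancel₀ ha]
      rw [hone]
      exact Submodule.smul_mem _ _ hvec
    -- main claim
    have hmain : ∀ x j, c x j ≠ 0 → (Pi.single j 1 : σ → ℚ) ∈ Submodule.span ℚ (Set.range c) := by
      intro x j hcxj
      by_contra hnot
      have hfree : ∀ k, (0 : (K ⊕ X) →₀ ℕ) (Sum.inl k) = 0 := fun k => rfl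
      have hpxB : p x ∈ Ideal.span B := by
        rw [← hBI]
        exact Ideal.subset_span ⟨x, rfl⟩
      obtain ⟨h', hsub, hsum⟩ := Submodule.mem_span_set.mp hpxB
      have hios : p x = ∑ f ∈ h'.support, weightedHomogeneousComponent ww 1 (h' f * f) := by
        conv_lhs => rw [← whc_self (hphom x), ← hsum]
        rw [Finsupp.sum, map_sum]
        apply Finset.sum_congr rfl
        intro f _
        rw [smul_eq_mul]
      have hL : coeff (mf j) (p x) = -(c x j) := by
        rw [hpc x, MvPolynomial.coeff_sum]
        have hterm : ∀ i, coeff (mf j) (c x i • b i) = if i = j then -(c x j) else 0 := by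
          intro i
          rw [MvPolynomial.coeff_smul]
          have hk := hkey 1 0 hfree j i
          rw [zero_add, one_mul, MvPolynomial.coeff_zero_one] at hk
          rw [hk]
          split_ifs with hij
          · subst hij
            rw [smul_eq_mul]
            ring
          · rw [smul_zero]
        rw [Finset.sum_congr rfl fun i _ => hterm i, Finset.sum_ite_eq' Finset.univ j]
        simp
      have hR : ∀ f ∈ h'.support,
          coeff (mf j) (weightedHomogeneousComponent ww 1 (h' f * f)) = 0 := by
        intro f hf
        have hfB : f ∈ B := hsub hf
        have hfI : f ∈ Ideal.span (Set.range p) := by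
          rw [hBI]
          exact Ideal.subset_span hfB
        obtain ⟨d, hd1, hdhom⟩ := hstep1 f hfI (hB2 f hfB)
        rcases eq_or_lt_of_le hd1 with hd | hd
        · rw [← hd] at hdhom
          obtain ⟨i₀, q', hq'0, hfq, hsing⟩ := hclass f hfI (hB2 f hfB) hdhom
          have hii : i₀ ≠ j := fun h => hnot (h ▸ hsing)
          rw [whc_mul_homog hdhom le_rfl]
          set t := weightedHomogeneousComponent ww (1 - 1) (h' f) with htd
          rw [hfq, ← mul_assoc]
          have hk := hkey (t * q') 0 hfree j i₀
          rw [zero_add] at hk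
          rw [hk, if_neg hii]
        · rw [whc_mul_homog_zero hdhom hd, coeff_zero]
      have hzero : -(c x j) = 0 := by
        rw [← hL, hios, MvPolynomial.coeff_sum]
        exact Finset.sum_eq_zero hR
      exact hcxj (neg_eq_zero.mp hzero)
    refine ⟨{j | (Pi.single j 1 : σ → ℚ) ∈ Submodule.span ℚ (Set.range c)}, le_antisymm ?_ ?_⟩
    · rw [Submodule.span_le]
      rintro v ⟨x, rfl⟩
      rw [← Finset.univ_sum_single (c x)]
      apply Submodule.sum_mem
      intro j _
      rcases eq_or_ne (c x j) 0 with h | h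
      · rw [h]
        simp
      · have hsm : Pi.single j (c x j) = c x j • (Pi.single j 1 : σ → ℚ) := by
          rw [← Pi.single_smul, smul_eq_mul, mul_one]
        rw [hsm]
        exact Submodule.smul_mem _ _ (Submodule.subset_span ⟨j, hmain x j h, rfl⟩)
    · rw [Submodule.span_le]
      rintro v ⟨j, hj, rfl⟩
      exact hj
  · rintro ⟨S, hS⟩
    refine ⟨b '' S, ?_, ?_⟩
    · rintro f ⟨j, _, rfl⟩; exact hsuppcard j
    · apply ideal_span_eq_of_span_eq
      have hpφ : p = ⇑(Fintype.linearCombination ℚ b) ∘ c := by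
        funext x
        simp only [Function.comp_apply, Fintype.linearCombination_apply]
        exact hpc x
      rw [hpφ, Set.range_comp, Submodule.span_image, hS, ← Submodule.span_image]
      congr 1
      rw [Set.image_image]
      apply Set.image_congr
      intro j _
      simp [Fintype.linearCombination_apply, Pi.single_apply, ite_smul]
end

section
/- Generalisation to networks with irreversible reactions (sufficiency, as stated in the paper's paragraph 'Generalisation to Non-Reversible Networks'): assume X is finite and let τ be a finite index type of irreversible reactions, with rate-constant variables kirr : τ → K and source/target exponent vectors μ' l, ν' l : X →₀ ℕ, such that all rate-constant variables kf j, kb j (j ∈ σ) and kirr l (l ∈ τ) are pairwise distinct. Define the monomial flux of the irreversible reaction l as g l := monomial (Finsupp.single (Sum.inl (kirr l)) 1 + Finsupp.mapDomain Sum.inr (μ' l)) 1, i.e. g l = (kirr l)·x^{μ' l}, and the steady-state polynomial of species x as q x := Σ_{j ∈ σ} ((μ j x : ℤ) − ν j x) • b j + Σ_{l ∈ τ} ((ν' l x : ℤ) − μ' l x) • g l. If there exists a set S ⊆ σ ⊕ τ such that the ℚ-linear span of the rows of the combined coefficient matrix (the vectors in ((σ ⊕ τ) → ℚ) whose σ-components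 are (μ j x − ν j x) and whose τ-components are (ν' l x − μ' l x), for x ∈ X) equals the ℚ-linear span of { Pi.single s 1 : s ∈ S }, then Ideal.span { q x : x ∈ X } = Ideal.span ({ b j : Sum.inl j ∈ S } ∪ { g l : Sum.inr l ∈ S }); in particular the steady state ideal is generated by polynomials each having at most two terms. -/
/-- generalisation to networks with irreversible reactions,
sufficiency: if the row space of the combined coefficient matrix of a network
with reversible reactions (binomials `b j`) and irreversible reactions
(monomial fluxes `g l`) is the span of a set of standard basis vectors indexed
by `S ⊆ σ ⊕ τ`, then the steady state ideal is generated by the corresponding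
binomials and monomials; in particular it is generated by polynomials having
at most two terms each. -/
theorem steady_state_ideal_of_mixed_network
    {K X σ τ : Type*} [Fintype σ] [Fintype τ] [Fintype X] [DecidableEq σ] [DecidableEq τ]
    (kf kb : σ → K) (kirr : τ → K)
    (μ ν : σ → (X →₀ ℕ)) (μ' ν' : τ → (X →₀ ℕ))
    (hinj : Function.Injective (Sum.elim kf (Sum.elim kb kirr) : σ ⊕ (σ ⊕ τ) → K))
    (b : σ → MvPolynomial (K ⊕ X) ℚ)
    (hb : ∀ j, b j =
      MvPolynomial.monomial
        (Finsupp.single (Sum.inl (kf j)) 1 + Finsupp.mapDomain Sum.inr (μ j)) (-1 : ℚ) +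
      MvPolynomial.monomial
        (Finsupp.single (Sum.inl (kb j)) 1 + Finsupp.mapDomain Sum.inr (ν j)) (1 : ℚ))
    (g : τ → MvPolynomial (K ⊕ X) ℚ)
    (hg : ∀ l, g l =
      MvPolynomial.monomial
        (Finsupp.single (Sum.inl (kirr l)) 1 + Finsupp.mapDomain Sum.inr (μ' l)) (1 : ℚ))
    (q : X → MvPolynomial (K ⊕ X) ℚ)
    (hq : ∀ x, q x =
      ∑ j : σ, ((μ j x : ℤ) - (ν j x : ℤ)) • b j +
      ∑ l : τ, ((ν' l x : ℤ) - (μ' l x : ℤ)) • g l)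
    (r : X → (σ ⊕ τ) → ℚ)
    (hr : ∀ x, r x = Sum.elim
      (fun j => (μ j x : ℚ) - (ν j x : ℚ))
      (fun l => (ν' l x : ℚ) - (μ' l x : ℚ)))
    (S : Set (σ ⊕ τ))
    (hS : Submodule.span ℚ (Set.range r) =
      Submodule.span ℚ ((fun s => Pi.single s (1 : ℚ)) '' S)) :
    Ideal.span (Set.range q) =
      Ideal.span ((b '' {j | Sum.inl j ∈ S}) ∪ (g '' {l | Sum.inr l ∈ S})) ∧
      ∃ B : Set (MvPolynomial (K ⊕ X) ℚ),
        (∀ f ∈ B, f.support.card ≤ 2) ∧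
        Ideal.span (Set.range q) = Ideal.span B := by
  classical
  set h : σ ⊕ τ → MvPolynomial (K ⊕ X) ℚ := Sum.elim b g with hh
  have hset : (b '' {j | Sum.inl j ∈ S}) ∪ (g '' {l | Sum.inr l ∈ S}) = h '' S := by
    ext p
    simp only [Set.mem_union, Set.mem_image, Set.mem_setOf_eq]
    constructor
    · rintro (⟨j, hj, rfl⟩ | ⟨l, hl, rfl⟩)
      exacts [⟨Sum.inl j, hj, rfl⟩, ⟨Sum.inr l, hl, rfl⟩]
    · rintro ⟨s, hs, rfl⟩
      cases s with
      | inl j => exact Or.inl ⟨j, hs, rfl⟩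
      | inr l => exact Or.inr ⟨l, hs, rfl⟩
  have hqsum : ∀ x, q x = ∑ s : σ ⊕ τ, r x s • h s := by
    intro x
    rw [hq, hr, Fintype.sum_sum_type]
    simp only [Sum.elim_inl, Sum.elim_inr, hh]
    congr 1
    · apply Finset.sum_congr rfl
      intro i _
      rw [← Int.cast_smul_eq_zsmul ℚ]
      push_cast
      ring_nf
    · apply Finset.sum_congr rfl
      intro i _
      rw [← Int.cast_smul_eq_zsmul ℚ]
      push_cast
      ring_nf
  -- vanishing off S for elements of the span of singles
  have hvan : ∀ v ∈ Submodule.span ℚ ((fun s => Pi.single s (1 : ℚ)) '' S),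
      ∀ s ∉ S, v s = 0 := by
    intro v hv
    induction hv using Submodule.span_induction with
    | mem v hv =>
      obtain ⟨s', hs', rfl⟩ := hv
      intro s hs
      exact Pi.single_eq_of_ne (by rintro rfl; exact hs hs') 1
    | zero => intro s _; rfl
    | add u w _ _ hu hw => intro s hs; simp [hu s hs, hw s hs]
    | smul c u _ hu => intro s hs; simp [hu s hs]
  have hrvan : ∀ x, ∀ s ∉ S, r x s = 0 := by
    intro x
    exact hvan (r x) (hS ▸ Submodule.subset_span (Set.mem_range_self x))
  have hmain : Ideal.span (Set.range q) = Ideal.span (h '' S) := by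
    apply le_antisymm
    · rw [Ideal.span_le]
      rintro p ⟨x, rfl⟩
      rw [hqsum x]
      apply Ideal.sum_mem
      intro s _
      by_cases hs : s ∈ S
      · rw [MvPolynomial.smul_eq_C_mul]
        exact Ideal.mul_mem_left _ _ (Ideal.subset_span ⟨s, hs, rfl⟩)
      · rw [hrvan x s hs, zero_smul]
        exact Ideal.zero_mem _
    · rw [Ideal.span_le]
      rintro p ⟨s, hs, rfl⟩
      have hsingle : (Pi.single s (1 : ℚ)) ∈ Submodule.span ℚ (Set.range r) := by
        rw [hS]
        exact Submodule.subset_span ⟨s, hs, rfl⟩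
      obtain ⟨c, hc⟩ := (Submodule.mem_span_range_iff_exists_fun ℚ).mp hsingle
      have key : h s = ∑ x : X, c x • q x := by
        have hc' : ∀ s', (∑ x : X, c x * r x s') = (Pi.single s (1 : ℚ) : (σ ⊕ τ) → ℚ) s' := by
          intro s'
          have := congrFun hc s'
          simpa [Finset.sum_apply] using this
        calc h s = ∑ s' : σ ⊕ τ, (Pi.single s (1 : ℚ) : (σ ⊕ τ) → ℚ) s' • h s' := by
              rw [Finset.sum_eq_single s]
              · simp
              · intro s' _ hne
                rw [Pi.single_eq_of_ne hne, zero_smul]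
              · intro habs; exact absurd (Finset.mem_univ s) habs
          _ = ∑ s' : σ ⊕ τ, (∑ x : X, c x * r x s') • h s' := by
              simp_rw [hc']
          _ = ∑ x : X, c x • q x := by
              simp_rw [Finset.sum_smul, hqsum, Finset.smul_sum, smul_smul]
              rw [Finset.sum_comm]
      rw [key]
      apply Ideal.sum_mem
      intro x _
      rw [MvPolynomial.smul_eq_C_mul]
      exact Ideal.mul_mem_left _ _ (Ideal.subset_span (Set.mem_range_self x))
  constructor
  · rw [hset] at *
    exact hmain
  · refine ⟨h '' S, ?_, hmain⟩
    rintro p ⟨s, hs, rfl⟩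
    have hcard : ∀ (d : (K ⊕ X) →₀ ℕ) (cc : ℚ),
        ((MvPolynomial.monomial d cc).support).card ≤ 1 := by
      intro d cc
      rw [MvPolynomial.support_monomial]
      split <;> simp
    cases s with
    | inl j =>
      simp only [hh, Sum.elim_inl, hb j]
      refine le_trans (Finset.card_le_card (MvPolynomial.support_add)) ?_
      refine le_trans (Finset.card_union_le _ _) ?_
      exact add_le_add (hcard _ _) (hcard _ _)
    | inr l =>
      simp only [hh, Sum.elim_inr, hg l]
      exact le_trans (hcard _ _) (by norm_num)
end
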